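/- Let {U_1, ..., U_{n+1}} be a sunflower of convex open sets in R^d with center U, and let k ≤ min{d-1, n-1}. Then any k-dimensional affine subspace H of R^d that intersects all U_i must intersect U. -/

import Mathlib

open Set Finset Metric

set_option maxHeartbeats 1000000

variable {E : Type*} [NormedAddCommGroup E] [NormedSpace ℝ E]

lemma isOpen_convexHull_of_isOpen {s : Set E} (hs : IsOpen s) :
    IsOpen (convexHull ℝ s) := by
  rw [← subset_interior_iff_isOpen]
  intro x hx
  have hsub : s ⊆ interior (convexHull ℝ s) :=
    interior_maximal (subset_convexHull ℝ s) hs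
  rw [_root_.convexHull_eq] at hx
  obtain ⟨ι, t, w, z, hw0, hw1, hz, hx⟩ := hx
  classical
  have hpos : ∃ i ∈ t, 0 < w i := by
    by_contra h
    push_neg at h
    have : (∑ i ∈ t, w i) ≤ 0 := Finset.sum_nonpos h
    linarith
  obtain ⟨i0, hi0, hwi0⟩ := hpos
  have hxe : x = w i0 • z i0 + ∑ i ∈ t.erase i0, w i • z i := by
    rw [← hx, Finset.centerMass_eq_of_sum_1 _ _ hw1, ← Finset.add_sum_erase _ _ hi0]
  set b : ℝ := ∑ i ∈ t.erase i0, w i with hb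
  have hbsum : w i0 + b = 1 := by
    rw [hb, Finset.add_sum_erase _ _ hi0]; exact hw1
  have hb0 : 0 ≤ b := Finset.sum_nonneg fun i hi => hw0 i (Finset.mem_of_mem_erase hi)
  rcases eq_or_lt_of_le hb0 with hb0' | hb0'
  · have hz0 : ∑ i ∈ t.erase i0, w i • z i = 0 := by
      apply Finset.sum_eq_zero
      intro i hi
      have hzero := (Finset.sum_eq_zero_iff_of_nonneg
        (fun j hj => hw0 j (Finset.mem_of_mem_erase hj))).1 hb0'.symm i hi
      rw [hzero, zero_smul]
    have hxz : x = z i0 := by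
      have hw1' : w i0 = 1 := by rw [← hbsum, ← hb0']; ring
      rw [hxe, hz0, add_zero, hw1', one_smul]
    rw [hxz]
    exact hsub (hz i0 hi0)
  · set y : E := b⁻¹ • ∑ i ∈ t.erase i0, w i • z i with hy
    have hymem : y ∈ convexHull ℝ s := by
      have hcm := Finset.centerMass_mem_convexHull (t.erase i0)
        (fun i hi => hw0 i (Finset.mem_of_mem_erase hi)) (by rw [← hb]; exact hb0')
        (fun i hi => hz i (Finset.mem_of_mem_erase hi))
      simpa [Finset.centerMass, hy, hb] using hcm
    have hxy : x = w i0 • z i0 + b • y := by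
      rw [hxe, hy, smul_inv_smul₀ (ne_of_gt hb0')]
    rw [hxy]
    exact (convex_convexHull ℝ s).combo_interior_self_mem_interior
      (hsub (hz i0 hi0)) hymem hwi0 hb0 hbsum


/-- core petal lemma -/
lemma sunflower_core {ι : Type*} {C W : Set E} {U : ι → Set E} {p z : E}
    (hCo : IsOpen C) (hCc : Convex ℝ C) (hp : p ∈ C)
    (hWo : IsOpen W) (hWc : Convex ℝ W) (hCW : C ⊆ W)
    (hUo : ∀ i, IsOpen (U i)) (hUc : ∀ i, Convex ℝ (U i)) (hCU : ∀ i, C ⊆ U i)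
    (hUW : ∀ i, U i ∩ W ⊆ C)
    {T : Set E} (hT : T ⊆ ⋃ i, U i) (hz : z ∈ W) (hzT : z ∈ convexHull ℝ T) :
    z ∈ C := by
  classical
  by_contra hzC
  rw [_root_.convexHull_eq] at hzT
  obtain ⟨κ, t, lam, q, hl0, hl1, hqT, hq⟩ := hzT
  have hq' : z = ∑ i ∈ t, lam i • q i := by
    rw [← hq, Finset.centerMass_eq_of_sum_1 _ _ hl1]
  have htne : t.Nonempty := by
    rcases Finset.eq_empty_or_nonempty t with h | h
    · exfalso; rw [h] at hl1; simp at hl1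
    · exact h
  have hιne : Nonempty ι := by
    obtain ⟨i₁, hi₁⟩ := htne
    obtain ⟨j, hj⟩ := Set.mem_iUnion.1 (hT (hqT i₁ hi₁))
    exact ⟨j⟩
  -- assign a petal to each point
  have hassign : ∀ i : κ, ∃ j : ι, i ∈ t → q i ∈ U j := by
    intro i
    by_cases hi : i ∈ t
    · obtain ⟨j, hj⟩ := Set.mem_iUnion.1 (hT (hqT i hi))
      exact ⟨j, fun _ => hj⟩
    · exact ⟨hιne.some, fun h => absurd h hi⟩
  choose ν hν using hassign
  -- the path from z towards p
  set φ : ℝ → E := fun s => z + s • (p - z) with hφ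
  have hφ0 : φ 0 = z := by simp [hφ]
  have hφ1 : φ 1 = p := by simp [hφ]
  have hφaff : ∀ a u : ℝ, φ ((1 - u) * a + u) = (1 - u) • φ a + u • φ 1 := by
    intro a u
    simp only [hφ]
    module
  have hφdist : ∀ a b : ℝ, φ a - φ b = (a - b) • (p - z) := by
    intro a b
    simp only [hφ]
    module
  set B : Set ℝ := {s : ℝ | φ s ∈ C ∧ 0 ≤ s ∧ s ≤ 1} with hB
  have h1B : (1 : ℝ) ∈ B := by
    refine ⟨?_, by norm_num, le_refl 1⟩
    rw [hφ1]; exact hp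
  have hBbdd : BddBelow B := ⟨0, fun b hb => hb.2.1⟩
  have hBne : B.Nonempty := ⟨1, h1B⟩
  set s0 : ℝ := sInf B with hs0
  clear_value s0
  have hs0_0 : 0 ≤ s0 := by rw [hs0]; exact le_csInf hBne fun b hb => hb.2.1
  have hs0_1 : s0 ≤ 1 := by rw [hs0]; exact csInf_le hBbdd h1B
  set w : E := φ s0 with hw
  clear_value w
  -- w is not in C
  have hwC : w ∉ C := by
    intro hwC
    rcases eq_or_lt_of_le hs0_0 with h0 | h0
    · apply hzC
      rw [hw, ← h0, hφ0] at hwC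
      exact hwC
    · obtain ⟨ε, hε, hball⟩ := Metric.isOpen_iff.1 hCo w hwC
      set δ : ℝ := min (s0 / 2) (ε / (2 * (‖p - z‖ + 1))) with hδ
      have hδpos : 0 < δ := by
        apply lt_min (by linarith)
        positivity
      have hnorm : ‖φ (s0 - δ) - w‖ < ε := by
        rw [hw, hφdist]
        have h1 : ‖(s0 - δ - s0) • (p - z)‖ = δ * ‖p - z‖ := by
          rw [norm_smul]
          simp [abs_of_pos hδpos]
        rw [h1]
        have hδle : δ ≤ ε / (2 * (‖p - z‖ + 1)) := min_le_right _ _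
        have hpz : (0:ℝ) ≤ ‖p - z‖ := norm_nonneg _
        calc δ * ‖p - z‖ ≤ (ε / (2 * (‖p - z‖ + 1))) * ‖p - z‖ := by
              apply mul_le_mul_of_nonneg_right hδle hpz
          _ < ε := by
              rw [div_mul_eq_mul_div, div_lt_iff₀ (by positivity)]
              nlinarith
      have hmem : s0 - δ ∈ B := by
        refine ⟨hball (by simpa [Metric.mem_ball, dist_eq_norm] using hnorm), ?_, ?_⟩
        · have : δ ≤ s0 / 2 := min_le_left _ _
          linarith
        · linarith
      have := csInf_le hBbdd hmem
      rw [← hs0] at this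
      linarith
  have hs0lt1 : s0 < 1 := by
    rcases eq_or_lt_of_le hs0_1 with h | h
    · exfalso; apply hwC; rw [hw, h, hφ1]; exact hp
    · exact h
  -- points strictly after s0 on the path are in C
  have hmem : ∀ s : ℝ, s0 < s → s ≤ 1 → φ s ∈ C := by
    intro s hs hs1
    obtain ⟨a, haB, has⟩ := (csInf_lt_iff hBbdd hBne).1 (by rw [← hs0]; exact hs)
    have ha1 : a < 1 := lt_of_lt_of_le has hs1
    set u : ℝ := (s - a) / (1 - a) with hu
    have hu0 : 0 ≤ u := div_nonneg (by linarith) (by linarith)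
    have hu1 : u ≤ 1 := by
      rw [hu, div_le_one (by linarith)]; linarith
    have h1a : (1:ℝ) - a ≠ 0 := by intro h; rw [sub_eq_zero] at h; linarith
    have hmul : u * (1 - a) = s - a := by rw [hu]; field_simp
    have hsa : (1 - u) * a + u = s := by linear_combination hmul
    have := hφaff a u
    rw [hsa, hφ1] at this
    rw [this]
    exact hCc haB.1 hp (by linarith) hu0 (by ring)
  -- w is in W
  have hwW : w ∈ W := by
    have : w = (1 - s0) • z + s0 • p := by
      simp only [hw, hφ]; module
    rw [this]
    exact hWc hz (hCW hp) (by linarith) hs0_0 (by ring)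
  -- separating functional at w
  obtain ⟨g, hg⟩ := geometric_hahn_banach_open_point hCc hCo hwC
  set c : ℝ := g w with hc
  -- pulled points
  set x' : κ → E := fun i => (1 - s0) • q i + s0 • p with hx'
  clear_value x'
  have hwsum : w = ∑ i ∈ t, lam i • x' i := by
    have h1 : ∑ i ∈ t, lam i • x' i
        = (1 - s0) • (∑ i ∈ t, lam i • q i) + (∑ i ∈ t, lam i) • (s0 • p) := by
      rw [Finset.smul_sum, Finset.sum_smul, ← Finset.sum_add_distrib]
      apply Finset.sum_congr rfl
      intro i hi
      simp only [hx']
      module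
    rw [h1, hl1, ← hq', one_smul, hw]
    simp only [hφ]
    module
  have hcsum : c = ∑ i ∈ t, lam i * g (x' i) := by
    rw [hc, hwsum, map_sum]
    apply Finset.sum_congr rfl
    intro i hi
    simp
  -- a petal point at level ≥ c
  have hex : ∃ i ∈ t, 0 < lam i ∧ c ≤ g (x' i) := by
    by_contra h
    push_neg at h
    have hexpos : ∃ i ∈ t, 0 < lam i := by
      by_contra h2
      push_neg at h2
      have : (∑ i ∈ t, lam i) ≤ 0 := Finset.sum_nonpos fun i hi => h2 i hi
      linarith
    obtain ⟨ip, hip, hlampos⟩ := hexpos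
    have hlt : ∑ i ∈ t, lam i * g (x' i) < ∑ i ∈ t, lam i * c := by
      apply Finset.sum_lt_sum
      · intro i hi
        rcases eq_or_lt_of_le (hl0 i hi) with h0 | h0
        · rw [← h0]; simp
        · exact le_of_lt (mul_lt_mul_of_pos_left (h i hi h0) h0)
      · exact ⟨ip, hip, mul_lt_mul_of_pos_left (h ip hip hlampos) hlampos⟩
    rw [← Finset.sum_mul, hl1, one_mul] at hlt
    rw [← hcsum] at hlt
    exact lt_irrefl c hlt
  obtain ⟨istar, histar, hlampos, hclevel⟩ := hex
  set ξ : E := x' istar with hξ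
  clear_value ξ
  have hξU : ξ ∈ U (ν istar) := by
    have hqU : q istar ∈ U (ν istar) := hν istar histar
    have hxi : ξ = (1 - s0) • q istar + s0 • p := by simp only [hξ, hx']
    rw [hxi]
    exact (hUc (ν istar)) hqU (hCU (ν istar) hp) (by linarith) hs0_0 (by ring)
  -- direction with g v = 1
  have hgp : g p < c := hg p hp
  set v : E := (c - g p)⁻¹ • (w - p) with hv
  clear_value v
  have hgpne : c - g p ≠ 0 := by intro h; rw [sub_eq_zero] at h; linarith
  have hgv : g v = 1 := by
    rw [hv, map_smul, map_sub, ← hc, smul_eq_mul, inv_mul_cancel₀ hgpne]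
  -- a point of U (ν istar) strictly above level c
  obtain ⟨δ0, hδ0pos, hballξ⟩ := Metric.isOpen_iff.1 (hUo (ν istar)) ξ hξU
  set δ : ℝ := δ0 / (2 * (‖v‖ + 1)) with hδdef
  clear_value δ
  have hδpos : 0 < δ := by rw [hδdef]; positivity
  set u : E := ξ + δ • v with hu
  clear_value u
  have huU : u ∈ U (ν istar) := by
    apply hballξ
    rw [Metric.mem_ball, dist_eq_norm, hu]
    have : ξ + δ • v - ξ = δ • v := by abel
    rw [this, norm_smul, Real.norm_eq_abs, abs_of_pos hδpos]
    have h1 : δ * ‖v‖ ≤ δ * (‖v‖ + 1) := by nlinarith [norm_nonneg v]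
    have h2 : δ * (‖v‖ + 1) = δ0 / 2 := by
      rw [hδdef]; field_simp
    linarith
  have hgu : c + δ ≤ g u := by
    rw [hu, map_add, map_smul, hgv]
    simp only [smul_eq_mul, mul_one]
    linarith
  -- ball around w inside W
  obtain ⟨ε, hεpos, hballw⟩ := Metric.isOpen_iff.1 hWo w hwW
  -- choose mixing parameter
  set τ : ℝ := min (1/2) (ε / (2 * (‖u - w‖ + 1))) with hτdef
  clear_value τ
  have hτpos : 0 < τ := by
    rw [hτdef]
    apply lt_min (by norm_num)
    positivity
  have hτhalf : τ ≤ 1/2 := by rw [hτdef]; exact min_le_left _ _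
  have hτuw : τ * ‖u - w‖ < ε / 2 := by
    have h1 : τ ≤ ε / (2 * (‖u - w‖ + 1)) := by rw [hτdef]; exact min_le_right _ _
    have h2 : τ * ‖u - w‖ ≤ (ε / (2 * (‖u - w‖ + 1))) * ‖u - w‖ :=
      mul_le_mul_of_nonneg_right h1 (norm_nonneg _)
    have h3 : (ε / (2 * (‖u - w‖ + 1))) * ‖u - w‖ < ε / 2 := by
      rw [div_mul_eq_mul_div, div_lt_iff₀ (by positivity)]
      nlinarith [norm_nonneg (u - w)]
    linarith
  set η : ℝ := τ * δ with hη
  clear_value η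
  have hηpos : 0 < η := by rw [hη]; exact mul_pos hτpos hδpos
  -- choose s1 slightly after s0
  set Δ : ℝ := min (1 - s0) (min (ε / (2 * (‖p - z‖ + 1))) (η / (|g p - g z| + 1))) with hΔ
  clear_value Δ
  have hΔpos : 0 < Δ := by
    rw [hΔ]
    apply lt_min (by linarith)
    apply lt_min
    · positivity
    · positivity
  set s1 : ℝ := s0 + Δ with hs1def
  clear_value s1
  have hs1_1 : s1 ≤ 1 := by
    have : Δ ≤ 1 - s0 := by rw [hΔ]; exact min_le_left _ _
    rw [hs1def]; linarith
  have hs1gt : s0 < s1 := by rw [hs1def]; linarith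
  set c' : E := φ s1 with hc'
  clear_value c'
  have hc'C : c' ∈ C := by rw [hc']; exact hmem s1 hs1gt hs1_1
  have hc'w : ‖c' - w‖ < ε / 2 := by
    rw [hc', hw, hφdist]
    rw [norm_smul, Real.norm_eq_abs]
    have habs : |s1 - s0| = Δ := by rw [hs1def]; simp [abs_of_pos hΔpos]
    rw [habs]
    have h1 : Δ ≤ ε / (2 * (‖p - z‖ + 1)) := by
      rw [hΔ]; exact le_trans (min_le_right _ _) (min_le_left _ _)
    have h2 : Δ * ‖p - z‖ ≤ (ε / (2 * (‖p - z‖ + 1))) * ‖p - z‖ :=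
      mul_le_mul_of_nonneg_right h1 (norm_nonneg _)
    have h3 : (ε / (2 * (‖p - z‖ + 1))) * ‖p - z‖ < ε / 2 := by
      rw [div_mul_eq_mul_div, div_lt_iff₀ (by positivity)]
      nlinarith [norm_nonneg (p - z)]
    linarith
  have hgc' : c - η < g c' := by
    have heq : g c' - c = Δ * (g p - g z) := by
      have h0 : c' - w = (s1 - s0) • (p - z) := by rw [hc', hw]; exact hφdist s1 s0
      have h3 : g c' - g w = (s1 - s0) * (g p - g z) := by
        rw [← map_sub, h0, map_smul, map_sub]; simp
      have h4 : s1 - s0 = Δ := by rw [hs1def]; ring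
      rw [hc, h3, h4]
    have hbound : |Δ * (g p - g z)| < η := by
      rw [abs_mul, abs_of_pos hΔpos]
      have h1 : Δ ≤ η / (|g p - g z| + 1) := by
        rw [hΔ]; exact le_trans (min_le_right _ _) (min_le_right _ _)
      have h2 : Δ * |g p - g z| ≤ (η / (|g p - g z| + 1)) * |g p - g z| :=
        mul_le_mul_of_nonneg_right h1 (abs_nonneg _)
      have h3 : (η / (|g p - g z| + 1)) * |g p - g z| < η := by
        rw [div_mul_eq_mul_div, div_lt_iff₀ (by positivity)]
        nlinarith [abs_nonneg (g p - g z)]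
      linarith
    have := neg_lt_of_abs_lt hbound
    linarith [heq]
  -- the contradiction point
  set q' : E := (1 - τ) • c' + τ • u with hq'def
  clear_value q'
  have hq'U : q' ∈ U (ν istar) := by
    rw [hq'def]
    exact (hUc (ν istar)) (hCU (ν istar) hc'C) huU (by linarith) (le_of_lt hτpos) (by ring)
  have hq'W : q' ∈ W := by
    apply hballw
    rw [Metric.mem_ball, dist_eq_norm]
    have heq : q' - w = (1 - τ) • (c' - w) + τ • (u - w) := by
      rw [hq'def]; module
    rw [heq]
    calc ‖(1 - τ) • (c' - w) + τ • (u - w)‖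
        ≤ ‖(1 - τ) • (c' - w)‖ + ‖τ • (u - w)‖ := norm_add_le _ _
      _ = (1 - τ) * ‖c' - w‖ + τ * ‖u - w‖ := by
          rw [norm_smul, norm_smul, Real.norm_eq_abs, Real.norm_eq_abs,
            abs_of_pos (by linarith : (0:ℝ) < 1 - τ), abs_of_pos hτpos]
      _ < ε := by
          have h1 : (1 - τ) * ‖c' - w‖ ≤ ‖c' - w‖ := by
            nlinarith [norm_nonneg (c' - w)]
          linarith
  have hq'C : q' ∈ C := hUW (ν istar) ⟨hq'U, hq'W⟩
  have hlt : g q' < c := hg q' hq'C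
  have hgq' : g q' = (1 - τ) * g c' + τ * g u := by
    rw [hq'def, map_add, map_smul, map_smul]; simp
  -- derive contradiction
  have h1 : (1 - τ) * (c - η) < (1 - τ) * g c' :=
    mul_lt_mul_of_pos_left hgc' (by linarith)
  have h2 : τ * (c + δ) ≤ τ * g u := mul_le_mul_of_nonneg_left hgu (le_of_lt hτpos)
  have hfinal : (1 - τ) * (c - η) + τ * (c + δ) = c + τ * τ * δ := by
    rw [hη]; ring
  nlinarith [mul_pos (mul_pos hτpos hτpos) hδpos]


/-- Corollary 2.3: if `{U 0, …, U n}` is a sunflower of convex open sets in `ℝ^d` with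
center `⋂ k, U k`, and `k ≤ min (d-1) (n-1)`, then any `k`-dimensional affine subspace `H`
of `ℝ^d` intersecting all the `U i` must intersect the center. -/
theorem sunflower_affine_subspace (d n k : ℕ) (hk : k ≤ min (d - 1) (n - 1))
    (U : Fin (n + 1) → Set (EuclideanSpace ℝ (Fin d)))
    (hconv : ∀ i, Convex ℝ (U i)) (hopen : ∀ i, IsOpen (U i))
    (hcenter : (⋂ j, U j).Nonempty)
    (hsun : ∀ i j, i ≠ j → U i ∩ U j = ⋂ l, U l)
    (H : AffineSubspace ℝ (EuclideanSpace ℝ (Fin d)))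
    (hHne : (H : Set (EuclideanSpace ℝ (Fin d))).Nonempty)
    (hdim : Module.finrank ℝ H.direction = k)
    (hH : ∀ i, ((H : Set (EuclideanSpace ℝ (Fin d))) ∩ U i).Nonempty) :
    ((H : Set (EuclideanSpace ℝ (Fin d))) ∩ ⋂ j, U j).Nonempty := by
  classical
  -- trivial case n = 0
  rcases Nat.eq_zero_or_pos n with hn0 | hnpos
  · subst hn0
    have hinter : (⋂ j, U j) = U 0 := by
      apply Set.Subset.antisymm (Set.iInter_subset U 0)
      intro a ha
      apply Set.mem_iInter.2
      intro j
      have hj : j = 0 := by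
        apply Fin.ext
        omega
      rw [hj]
      exact ha
    rw [hinter]
    exact hH 0
  -- now n ≥ 1
  set C : Set (EuclideanSpace ℝ (Fin d)) := ⋂ j, U j with hC
  have h01 : (⟨0, by omega⟩ : Fin (n+1)) ≠ ⟨1, by omega⟩ := by
    simp [Fin.ext_iff]
  have hCopen : IsOpen C := by
    rw [← hsun _ _ h01]
    exact (hopen _).inter (hopen _)
  have hCconv : Convex ℝ C := by
    rw [← hsun _ _ h01]
    exact (hconv _).inter (hconv _)
  have hCsub : ∀ i, C ⊆ U i := fun i => Set.iInter_subset U i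
  have hpair : ∀ i j, i ≠ j → U i ∩ U j ⊆ C := fun i j hij => (hsun i j hij).le
  obtain ⟨p, hp⟩ := hcenter
  by_contra hcon
  have hdisj : Disjoint C (H : Set (EuclideanSpace ℝ (Fin d))) := by
    rw [Set.disjoint_left]
    intro a haC haH
    exact hcon ⟨a, haH, haC⟩
  obtain ⟨f, uu, hfa, hfb⟩ := geometric_hahn_banach_open hCconv hCopen H.convex hdisj
  -- f is constant on H
  have hconst : ∀ b1, b1 ∈ (H : Set (EuclideanSpace ℝ (Fin d))) →
      ∀ b2, b2 ∈ (H : Set (EuclideanSpace ℝ (Fin d))) → f b1 = f b2 := by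
    intro b1 hb1 b2 hb2
    by_contra hne
    have hfne : f b2 - f b1 ≠ 0 := sub_ne_zero.2 fun h => hne h.symm
    set r : ℝ := (uu - 1 - f b1) / (f b2 - f b1) with hr
    have hbH : r • (b2 -ᵥ b1) +ᵥ b1 ∈ H := AffineSubspace.smul_vsub_vadd_mem H r hb2 hb1 hb1
    have hfval : f (r • (b2 -ᵥ b1) +ᵥ b1) = uu - 1 := by
      have : f (r • (b2 -ᵥ b1) +ᵥ b1) = r * (f b2 - f b1) + f b1 := by
        simp only [vsub_eq_sub, vadd_eq_add, map_add, map_smul, map_sub, smul_eq_mul]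
      rw [this, hr, div_mul_cancel₀ _ hfne]
      ring
    have hge := hfb _ hbH
    rw [hfval] at hge
    linarith
  -- points in H ∩ U i
  choose x hx using hH
  set i0 : Fin (n+1) := ⟨0, by omega⟩ with hi0
  have hflevel : ∀ i, f (x i) = f (x i0) := fun i => hconst _ (hx i).1 _ (hx i0).1
  have hult : uu ≤ f (x i0) := hfb _ (hx i0).1
  have hfCl : ∀ a ∈ C, f a < f (x i0) := fun a ha => lt_of_lt_of_le (hfa a ha) hult
  -- affine dependence
  have hdep : ¬ AffineIndependent ℝ x := by
    intro hind
    have hfr := hind.finrank_vectorSpan (by simp : Fintype.card (Fin (n+1)) = n + 1)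
    have hsub2 : Set.range x ⊆ (H : Set (EuclideanSpace ℝ (Fin d))) := by
      rintro _ ⟨i, rfl⟩; exact (hx i).1
    have hle : vectorSpan ℝ (Set.range x) ≤ H.direction := by
      rw [AffineSubspace.direction_eq_vectorSpan]
      exact vectorSpan_mono ℝ hsub2
    have hfin : Module.finrank ℝ (vectorSpan ℝ (Set.range x)) ≤ Module.finrank ℝ H.direction :=
      Submodule.finrank_mono hle
    rw [hfr, hdim] at hfin
    have hk2 : k ≤ n - 1 := le_trans hk (min_le_right _ _)
    omega
  rw [affineIndependent_iff] at hdep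
  push_neg at hdep
  obtain ⟨s, wt, hw0sum, hwx0, e, hes, hwe⟩ := hdep
  -- positive and nonpositive parts
  set P : Finset (Fin (n+1)) := s.filter (fun i => 0 < wt i) with hP
  set N : Finset (Fin (n+1)) := s.filter (fun i => ¬ 0 < wt i) with hN
  have hsum_split : (∑ i ∈ P, wt i) + ∑ i ∈ N, wt i = 0 := by
    rw [hP, hN, Finset.sum_filter_add_sum_filter_not]; exact hw0sum
  have hvec_split : (∑ i ∈ P, wt i • x i) + ∑ i ∈ N, wt i • x i = 0 := by
    rw [hP, hN, Finset.sum_filter_add_sum_filter_not]; exact hwx0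
  have hPpos : ∀ i ∈ P, 0 < wt i := fun i hi => (Finset.mem_filter.1 hi).2
  have hNnonpos : ∀ i ∈ N, wt i ≤ 0 := fun i hi => not_lt.1 (Finset.mem_filter.1 hi).2
  set W0 : ℝ := ∑ i ∈ P, wt i with hW0
  have hW0pos : 0 < W0 := by
    rcases lt_trichotomy (wt e) 0 with hlt | heq | hgt
    · have heN : e ∈ N := by rw [hN]; exact Finset.mem_filter.2 ⟨hes, by linarith⟩
      have h1 : (∑ i ∈ N, wt i) = wt e + ∑ i ∈ N.erase e, wt i :=
        (Finset.add_sum_erase _ _ heN).symm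
      have h2 : (∑ i ∈ N.erase e, wt i) ≤ 0 :=
        Finset.sum_nonpos fun i hi => hNnonpos i (Finset.mem_of_mem_erase hi)
      rw [hW0]
      linarith [hsum_split]
    · exact absurd heq hwe
    · have heP : e ∈ P := by rw [hP]; exact Finset.mem_filter.2 ⟨hes, hgt⟩
      have h1 : W0 = wt e + ∑ i ∈ P.erase e, wt i := by
        rw [hW0]; exact (Finset.add_sum_erase _ _ heP).symm
      have h2 : (0:ℝ) ≤ ∑ i ∈ P.erase e, wt i :=
        Finset.sum_nonneg fun i hi => le_of_lt (hPpos i (Finset.mem_of_mem_erase hi))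
      linarith
  have hNsum : (∑ i ∈ N, wt i) = -W0 := by rw [hW0] at *; linarith [hsum_split]
  have hNvec : (∑ i ∈ N, wt i • x i) = -(∑ i ∈ P, wt i • x i) := by
    have := hvec_split
    linear_combination (norm := module) this
  -- the Radon point
  set y : EuclideanSpace ℝ (Fin d) := W0⁻¹ • ∑ i ∈ P, wt i • x i with hy
  have hyP : y ∈ convexHull ℝ (⋃ i ∈ P, U i) := by
    have hcm := Finset.centerMass_mem_convexHull P (w := wt) (z := x)
      (fun i hi => le_of_lt (hPpos i hi)) (by rw [← hW0]; exact hW0pos)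
      (fun i hi => Set.mem_biUnion hi (hx i).2)
    have : P.centerMass wt x = y := by rw [Finset.centerMass, ← hW0, ← hy]
    rwa [this] at hcm
  have hNsumneg : (∑ i ∈ N, wt i) < 0 := by rw [hNsum]; linarith
  have hyN : y ∈ convexHull ℝ (⋃ i ∈ N, U i) := by
    have hcm := Finset.centerMass_mem_convexHull_of_nonpos N
      hNnonpos hNsumneg (fun i hi => Set.mem_biUnion hi (hx i).2)
    have : N.centerMass wt x = y := by
      rw [Finset.centerMass, hNsum, hNvec, hy, inv_neg, neg_smul, smul_neg, neg_neg]
    rwa [this] at hcm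
  have hNne : N.Nonempty := by
    rcases Finset.eq_empty_or_nonempty N with h | h
    · exfalso; rw [h, Finset.sum_empty] at hNsumneg; linarith
    · exact h
  obtain ⟨j1, hj1⟩ := hNne
  -- merged petal
  set TB : Set (EuclideanSpace ℝ (Fin d)) := ⋃ i ∈ N, U i with hTB
  set WB : Set (EuclideanSpace ℝ (Fin d)) := convexHull ℝ TB with hWB
  have hWBopen : IsOpen WB := by
    rw [hWB]
    exact isOpen_convexHull_of_isOpen (isOpen_biUnion fun i _ => hopen i)
  have hWBconv : Convex ℝ WB := by rw [hWB]; exact convex_convexHull ℝ TB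
  have hCWB : C ⊆ WB := by
    rw [hWB]
    exact (hCsub j1).trans ((Set.subset_biUnion_of_mem hj1).trans (subset_convexHull ℝ TB))
  have hTBsub : TB ⊆ ⋃ j : {j // j ∈ N}, U j.1 := by
    rw [hTB, Set.iUnion_subtype]
  -- step (a): each positive petal meets WB only in C
  have hstepa : ∀ i ∈ P, U i ∩ WB ⊆ C := by
    intro i hiP zz hzz
    have hne2 : ∀ j : {j // j ∈ N}, (j : Fin (n+1)) ≠ i := by
      intro j hj
      have h1 := hPpos i hiP
      have h2 := hNnonpos j.1 j.2
      rw [hj] at h2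
      linarith
    exact sunflower_core hCopen hCconv hp (hopen i) (hconv i) (hCsub i)
      (fun j : {j // j ∈ N} => hopen j.1) (fun j => hconv j.1) (fun j => hCsub j.1)
      (fun j => hpair j.1 i (hne2 j)) hTBsub hzz.1 (by rw [← hWB]; exact hzz.2)
  -- step (b): y ∈ C
  have hyWB : y ∈ WB := by rw [hWB, hTB]; exact hyN
  have hTPsub : (⋃ i ∈ P, U i) ⊆ ⋃ i : {i // i ∈ P}, U i.1 := by
    rw [Set.iUnion_subtype]
  have hyC : y ∈ C :=
    sunflower_core hCopen hCconv hp hWBopen hWBconv hCWB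
      (fun i : {i // i ∈ P} => hopen i.1) (fun i => hconv i.1) (fun i => hCsub i.1)
      (fun i => hstepa i.1 i.2) hTPsub hyWB hyP
  -- final contradiction
  have hfy : f y = f (x i0) := by
    rw [hy, map_smul, map_sum]
    have h1 : ∀ i ∈ P, f (wt i • x i) = wt i * f (x i0) := by
      intro i hi
      rw [map_smul, hflevel i]
      rfl
    rw [Finset.sum_congr rfl h1, ← Finset.sum_mul, ← hW0]
    simp only [smul_eq_mul]
    field_simp
  have := hfCl y hyC
  rw [hfy] at this
  exact lt_irrefl _ this
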